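/- Let k be a field of positive characteristic ℓ, and let ξ ∈ k be a nonzero element such that e := e(ξ) = min{i ≥ 2 : 1 + ξ + ξ² + ⋯ + ξ^{i−1} = 0} exists. Let d₁, …, d_n be positive integers such that e·ℓ does not divide any d_j. If f ≥ 2 is a natural number such that the image of Φ_f at ξ vanishes in k and Φ_f divides the polynomial ∏_{j=1}^{n} (1 + X + X² + ⋯ + X^{d_j − 1}) in ℤ[X], then f = e. -/
import Mathlib
open Polynomial

lemma aux_cyc_dvd_geom {f dn : ℕ} (hf : 0 < f)
    (h : cyclotomic f ℤ ∣ ∑ i ∈ Finset.range dn, (X : ℤ[X]) ^ i) : f ∣ dn := by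
  have h2 : cyclotomic f ℤ ∣ (X : ℤ[X]) ^ dn - 1 :=
    h.trans ⟨X - 1, (geom_sum_mul _ _).symm⟩
  set ζ : ℂ := Complex.exp (2 * Real.pi * Complex.I / f)
  have hζ : IsPrimitiveRoot ζ f := Complex.isPrimitiveRoot_exp f hf.ne'
  have hr : (aeval ζ) (cyclotomic f ℤ) = 0 := by
    have := hζ.isRoot_cyclotomic hf (R := ℂ)
    rw [aeval_def, eval₂_eq_eval_map, map_cyclotomic]; exact this
  obtain ⟨q, hq⟩ := h2
  have : ζ ^ dn - 1 = 0 := by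
    have := congrArg (aeval ζ) hq
    simpa [hr] using this
  exact hζ.dvd_of_pow_eq_one dn (sub_eq_zero.mp this)

/-- Let `k` be a field of positive characteristic `ℓ` and `ξ ∈ k` nonzero such that
`e = min {i ≥ 2 : 1 + ξ + ⋯ + ξ^{i-1} = 0}` exists.  Let `d₁, …, d_n` be positive integers
such that `e·ℓ` divides no `d_j`.  If `f ≥ 2` is such that `Φ_f(ξ) = 0` in `k` and `Φ_f`
divides `∏_j (1 + X + ⋯ + X^{d_j - 1})` in `ℤ[X]`, then `f = e`. -/
theorem cyclotomic_root_dvd_poincare_eq_e {k : Type*} [Field k] (ℓ : ℕ) [CharP k ℓ]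
    (hℓ : 0 < ℓ) (ξ : k) (hξ : ξ ≠ 0)
    (e : ℕ) (he2 : 2 ≤ e) (hsum : ∑ j ∈ Finset.range e, ξ ^ j = 0)
    (hmin : ∀ i : ℕ, 2 ≤ i → i < e → ∑ j ∈ Finset.range i, ξ ^ j ≠ 0)
    (n : ℕ) (d : Fin n → ℕ) (hd : ∀ j, 0 < d j) (hdiv : ∀ j, ¬ (e * ℓ ∣ d j))
    (f : ℕ) (hf : 2 ≤ f)
    (hroot : (Polynomial.aeval ξ) (Polynomial.cyclotomic f ℤ) = 0)
    (hdvd : Polynomial.cyclotomic f ℤ ∣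
      ∏ j : Fin n, ∑ i ∈ Finset.range (d j), Polynomial.X ^ i) :
    f = e := by
  have hfpos : 0 < f := by omega
  have hℓprime : ℓ.Prime := (CharP.char_is_prime_or_zero k ℓ).resolve_right (by omega)
  haveI : Fact ℓ.Prime := ⟨hℓprime⟩
  have hirr : Irreducible (cyclotomic f ℤ) := cyclotomic.irreducible hfpos
  have hprime : Prime (cyclotomic f ℤ) :=
    (UniqueFactorizationMonoid.irreducible_iff_prime).mp hirr
  obtain ⟨j₀, -, hj₀⟩ := hprime.exists_mem_finset_dvd hdvd
  have hfd : f ∣ d j₀ := aux_cyc_dvd_geom hfpos hj₀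
  by_cases hξ1 : ξ = 1
  · -- ξ = 1 case: e = ℓ
    subst hξ1
    have hsum' : (e : k) = 0 := by simpa using hsum
    have hle : ℓ ∣ e := (CharP.cast_eq_zero_iff k ℓ e).mp hsum'
    have hℓ2 : 2 ≤ ℓ := hℓprime.two_le
    have heℓ : e = ℓ := by
      by_contra hne
      have hlt : ℓ < e := lt_of_le_of_ne (Nat.le_of_dvd (by omega) hle) (Ne.symm hne)
      exact hmin ℓ hℓ2 hlt (by simpa using (CharP.cast_eq_zero k ℓ))
    have heval : ((eval 1 (cyclotomic f ℤ) : ℤ) : k) = 0 := by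
      have h1 := hroot
      rw [aeval_def, eval₂_at_one] at h1
      simpa using h1
    obtain ⟨p, a, hp, hpa⟩ : ∃ p a, p.Prime ∧ p ^ a = f := by
      by_contra hnot
      push_neg at hnot
      have := eval_one_cyclotomic_not_prime_pow (R := ℤ)
        (n := f) (fun {p} hp a => hnot p a hp)
      rw [this] at heval
      simp at heval
    have ha1 : 1 ≤ a := by
      rcases Nat.eq_zero_or_pos a with rfl | h
      · simp at hpa; omega
      · exact h
    haveI : Fact p.Prime := ⟨hp⟩
    obtain ⟨b, rfl⟩ : ∃ b, a = b + 1 := ⟨a - 1, by omega⟩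
    have hevalp : eval 1 (cyclotomic f ℤ) = p := by
      rw [← hpa]
      exact_mod_cast eval_one_cyclotomic_prime_pow (R := ℤ) (p := p) (k := b)
    have hlp' : ℓ ∣ p := by
      rw [hevalp] at heval
      exact_mod_cast (CharP.intCast_eq_zero_iff k ℓ p).mp (by exact_mod_cast heval)
    have hpl : p = ℓ := ((Nat.prime_dvd_prime_iff_eq hℓprime hp).mp hlp').symm
    have hb : b = 0 := by
      by_contra hbne
      have h2a : 2 ≤ b + 1 := by omega
      have : e * ℓ ∣ d j₀ := by
        rw [heℓ]
        calc ℓ * ℓ = ℓ ^ 2 := (sq ℓ).symm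
        _ ∣ ℓ ^ (b + 1) := pow_dvd_pow ℓ h2a
        _ = p ^ (b + 1) := by rw [hpl]
        _ = f := hpa
        _ ∣ d j₀ := hfd
      exact hdiv j₀ this
    rw [← hpa, hb, zero_add, pow_one, hpl]
    exact heℓ.symm
  · -- ξ ≠ 1 case: e = orderOf ξ
    have key : ∀ i : ℕ, (ξ ^ i = 1 ↔ ∑ j ∈ Finset.range i, ξ ^ j = 0) := by
      intro i
      have hgeom : (∑ j ∈ Finset.range i, ξ ^ j) * (ξ - 1) = ξ ^ i - 1 := geom_sum_mul ξ i
      constructor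
      · intro h
        have h0 : (∑ j ∈ Finset.range i, ξ ^ j) * (ξ - 1) = 0 := by rw [hgeom, h, sub_self]
        rcases mul_eq_zero.mp h0 with h' | h'
        · exact h'
        · exact absurd (sub_eq_zero.mp h') hξ1
      · intro h
        have h0 : ξ ^ i - 1 = 0 := by rw [← hgeom, h, zero_mul]
        exact sub_eq_zero.mp h0
    have hpow : ξ ^ e = 1 := (key e).mpr hsum
    have hfin : IsOfFinOrder ξ := isOfFinOrder_iff_pow_eq_one.mpr ⟨e, by omega, hpow⟩
    have horde : orderOf ξ = e := by
      have hdvde : orderOf ξ ∣ e := orderOf_dvd_of_pow_eq_one hpow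
      have hpos : 0 < orderOf ξ := hfin.orderOf_pos
      have hne1 : orderOf ξ ≠ 1 := fun h1 => hξ1 (orderOf_eq_one_iff.mp h1)
      by_contra hne
      have hlt : orderOf ξ < e := lt_of_le_of_ne (Nat.le_of_dvd (by omega) hdvde) hne
      exact hmin _ (by omega) hlt ((key _).mp (pow_orderOf_eq_one ξ))
    have hle : ¬ ℓ ∣ e := by
      intro hle
      obtain ⟨c, hc⟩ := hle
      have hc0 : 0 < c := by
        rcases Nat.eq_zero_or_pos c with rfl | h
        · omega
        · exact h
      have hηp : (ξ ^ c) ^ ℓ = 1 := by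
        rw [← pow_mul, mul_comm, ← hc, hpow]
      have hfrob : (ξ ^ c - 1) ^ ℓ = 0 := by
        rw [sub_pow_char, hηp, one_pow, sub_self]
      have h1 : ξ ^ c = 1 :=
        sub_eq_zero.mp (pow_eq_zero_iff (n := ℓ) (by omega) |>.mp hfrob)
      have : e ∣ c := horde ▸ orderOf_dvd_of_pow_eq_one h1
      have : e ≤ c := Nat.le_of_dvd hc0 this
      have : c < e := by
        have hℓ2 : 2 ≤ ℓ := hℓprime.two_le
        calc c < ℓ * c := by nlinarith
        _ = e := hc.symm
      omega
    have hxf : ξ ^ f = 1 := by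
      obtain ⟨q, hq⟩ := cyclotomic.dvd_X_pow_sub_one f ℤ
      have h0 := congrArg (aeval ξ) hq
      simp [hroot] at h0
      exact sub_eq_zero.mp (by simpa [sub_eq_zero] using h0)
    have hef : e ∣ f := horde ▸ orderOf_dvd_of_pow_eq_one hxf
    have hlf : ¬ ℓ ∣ f := by
      intro hlf
      have hcop : Nat.Coprime e ℓ := ((hℓprime.coprime_iff_not_dvd).mpr hle).symm
      exact hdiv j₀ ((Nat.Coprime.mul_dvd_of_dvd_of_dvd hcop hef hlf).trans hfd)
    haveI : NeZero (f : k) := ⟨fun h => hlf ((CharP.cast_eq_zero_iff k ℓ f).mp h)⟩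
    have hroot' : IsRoot (cyclotomic f k) ξ := by
      have h1 := hroot
      rw [aeval_def, eval₂_eq_eval_map, map_cyclotomic] at h1
      exact h1
    have hprim : IsPrimitiveRoot ξ f := (isRoot_cyclotomic_iff).mp hroot'
    rw [← horde, hprim.eq_orderOf]
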